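/- Let A be a unital algebra over ℂ and X a complex vector space. If φ : A × A → X is a bilinear map such that φ(A, B) = 0 whenever AB = BA = 0, then for every A ∈ A and every idempotent P in A, φ(A, P) + φ(P, A) = φ(AP, 1) + φ(1, PA). -/
import Mathlib


/-- A bilinear map vanishing on pairs with zero products satisfies
`φ(A,P) + φ(P,A) = φ(AP,1) + φ(1,PA)` for every idempotent `P`. -/
theorem bilinear_zero_product_identity_idempotent
    {A X : Type*} [Ring A] [Algebra ℂ A] [AddCommGroup X] [Module ℂ X]
    (φ : A →ₗ[ℂ] A →ₗ[ℂ] X)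
    (h : ∀ a b : A, a * b = 0 → b * a = 0 → φ a b = 0)
    (a : A) (P : A) (hP : P * P = P) :
    φ a P + φ P a = φ (a * P) 1 + φ 1 (P * a) := by
  set Q : A := 1 - P with hQdef
  have hPQ : P * Q = 0 := by rw [hQdef, mul_sub, mul_one, hP, sub_self]
  have hQP : Q * P = 0 := by rw [hQdef, sub_mul, one_mul, hP, sub_self]
  have hQQ : Q * Q = Q := by
    rw [hQdef, mul_sub, mul_one, sub_mul, one_mul, hP, sub_self, sub_zero]
  have hone : (1 : A) = P + Q := by rw [hQdef]; abel
  -- multiplication facts for the Peirce components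
  have b1Q : (P * a * P) * Q = 0 := by rw [mul_assoc, hPQ, mul_zero]
  have Qb1 : Q * (P * a * P) = 0 := by
    rw [show Q * (P * a * P) = (Q * P) * a * P by noncomm_ring, hQP, zero_mul, zero_mul]
  have b4P : (Q * a * Q) * P = 0 := by rw [mul_assoc, hQP, mul_zero]
  have Pb4 : P * (Q * a * Q) = 0 := by
    rw [show P * (Q * a * Q) = (P * Q) * a * Q by noncomm_ring, hPQ, zero_mul, zero_mul]
  have b2P : (P * a * Q) * P = 0 := by rw [mul_assoc, hQP, mul_zero]
  have Pb2 : P * (P * a * Q) = P * a * Q := by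
    rw [show P * (P * a * Q) = (P * P) * a * Q by noncomm_ring, hP]
  have b2Q : (P * a * Q) * Q = P * a * Q := by rw [mul_assoc, hQQ]
  have Qb2 : Q * (P * a * Q) = 0 := by
    rw [show Q * (P * a * Q) = (Q * P) * a * Q by noncomm_ring, hQP, zero_mul, zero_mul]
  have b2b2 : (P * a * Q) * (P * a * Q) = 0 := by
    rw [show (P * a * Q) * (P * a * Q) = P * a * (Q * P) * a * Q by noncomm_ring, hQP]
    noncomm_ring
  have b3P : (Q * a * P) * P = Q * a * P := by rw [mul_assoc, hP]
  have Pb3 : P * (Q * a * P) = 0 := by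
    rw [show P * (Q * a * P) = (P * Q) * a * P by noncomm_ring, hPQ, zero_mul, zero_mul]
  have b3Q : (Q * a * P) * Q = 0 := by rw [mul_assoc, hPQ, mul_zero]
  have Qb3 : Q * (Q * a * P) = Q * a * P := by
    rw [show Q * (Q * a * P) = (Q * Q) * a * P by noncomm_ring, hQQ]
  have b3b3 : (Q * a * P) * (Q * a * P) = 0 := by
    rw [show (Q * a * P) * (Q * a * P) = Q * a * (P * Q) * a * P by noncomm_ring, hPQ]
    noncomm_ring
  set b1 : A := P * a * P with hb1
  set b2 : A := P * a * Q with hb2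
  set b3 : A := Q * a * P with hb3
  set b4 : A := Q * a * Q with hb4
  have ha : a = b1 + b2 + b3 + b4 := by
    rw [hb1, hb2, hb3, hb4, hQdef]; noncomm_ring
  have haP : a * P = b1 + b3 := by rw [hb1, hb3, hQdef]; noncomm_ring
  have hPa : P * a = b1 + b2 := by rw [hb1, hb2, hQdef]; noncomm_ring
  -- zero-product pairs
  have hA : φ b1 Q = 0 := h _ _ b1Q Qb1
  have hB : φ Q b1 = 0 := h _ _ Qb1 b1Q
  have hC : φ b4 P = 0 := h _ _ b4P Pb4
  have hD : φ P b4 = 0 := h _ _ Pb4 b4P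
  have hG : φ Q P = 0 := h _ _ hQP hPQ
  have hH : φ P Q = 0 := h _ _ hPQ hQP
  have hI : φ b2 b2 = 0 := h _ _ b2b2 b2b2
  have hJ : φ b3 b3 = 0 := h _ _ b3b3 b3b3
  have hE : φ (Q + b2) (P - b2) = 0 := by
    apply h
    · simp only [add_mul, mul_sub, sub_mul, mul_add, hQP, Qb2, b2P, b2b2]; abel
    · simp only [add_mul, mul_sub, sub_mul, mul_add, hPQ, Pb2, b2P, b2Q, b2b2]; abel
  have hF : φ (P - b3) (Q + b3) = 0 := by
    apply h
    · simp only [add_mul, mul_sub, sub_mul, mul_add, hPQ, Pb3, b3Q, b3b3]; abel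
    · simp only [add_mul, mul_sub, sub_mul, mul_add, hQP, Qb3, b3P, b3b3]; abel
  have hE' : φ b2 P = φ Q b2 := by
    simp only [map_add, map_sub, LinearMap.add_apply, LinearMap.sub_apply, hG, hI] at hE
    rw [← sub_eq_zero, ← hE]; abel
  have hF' : φ P b3 = φ b3 Q := by
    simp only [map_add, map_sub, LinearMap.add_apply, LinearMap.sub_apply, hH, hJ] at hF
    rw [← sub_eq_zero, ← hF]; abel
  rw [haP, hPa, hone]
  nth_rewrite 1 [ha]
  nth_rewrite 1 [ha]
  simp only [map_add, LinearMap.add_apply, hA, hB, hC, hD, hE', hF']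
  abel
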